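/- Let V be a linear subspace of R^d, A an arbitrary nonempty subset of V, and Y a point in R^d. If θ̂_A minimizes ‖Y − x‖ over x ∈ A and θ̂_V minimizes ‖Y − x‖ over x ∈ V (Euclidean norm), then for every θ ∈ A one has ‖θ̂_A − θ‖² ≤ 4‖θ̂_V − θ‖². -/

import Mathlib

/-- Let `V` be a linear subspace of `ℝ^d`, `A ⊆ V` a nonempty subset and
`Y ∈ ℝ^d`. If `θA` minimizes `‖Y - x‖` over `x ∈ A` and `θV` minimizes `‖Y - x‖` over
`x ∈ V`, then for every `θ ∈ A` one has `‖θA - θ‖² ≤ 4‖θV - θ‖²`. -/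
theorem stmt0 {d : ℕ} (V : Submodule ℝ (EuclideanSpace ℝ (Fin d)))
    (A : Set (EuclideanSpace ℝ (Fin d))) (hAV : A ⊆ (V : Set (EuclideanSpace ℝ (Fin d))))
    (Y θA θV : EuclideanSpace ℝ (Fin d))
    (hθA : θA ∈ A) (hminA : ∀ x ∈ A, ‖Y - θA‖ ≤ ‖Y - x‖)
    (hθV : θV ∈ V) (hminV : ∀ x ∈ (V : Set (EuclideanSpace ℝ (Fin d))), ‖Y - θV‖ ≤ ‖Y - x‖)
    (θ : EuclideanSpace ℝ (Fin d)) (hθ : θ ∈ A) :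
    ‖θA - θ‖ ^ 2 ≤ 4 * ‖θV - θ‖ ^ 2 := by
  -- θV satisfies the infimum characterization, hence orthogonality
  have hinf : ‖Y - θV‖ = ⨅ w : V, ‖Y - w‖ := by
    refine le_antisymm ?_ ?_
    · exact le_ciInf fun w => hminV w w.2
    · exact ciInf_le ⟨0, by rintro _ ⟨w, rfl⟩; positivity⟩ (⟨θV, hθV⟩ : V)
  have horth : ∀ w ∈ V, inner ℝ (Y - θV) w = (0:ℝ) :=
    (Submodule.norm_eq_iInf_iff_real_inner_eq_zero V hθV).mp hinf
  -- Pythagoras: for x ∈ V, ‖Y - x‖² = ‖Y - θV‖² + ‖θV - x‖²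
  have pyth : ∀ x ∈ V, ‖Y - x‖ ^ 2 = ‖Y - θV‖ ^ 2 + ‖θV - x‖ ^ 2 := by
    intro x hx
    have h0 : inner ℝ (Y - θV) (θV - x) = (0:ℝ) := horth _ (V.sub_mem hθV hx)
    have : Y - x = (Y - θV) + (θV - x) := by abel
    rw [this, norm_add_sq_real, h0]; ring
  have hθV' : θ ∈ V := hAV hθ
  have hθAV : θA ∈ V := hAV hθA
  have h1 : ‖θV - θA‖ ^ 2 ≤ ‖θV - θ‖ ^ 2 := by
    have hA := pyth θA hθAV
    have hB := pyth θ hθV'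
    have := hminA θ hθ
    nlinarith [norm_nonneg (Y - θA), norm_nonneg (Y - θ)]
  have h2 : ‖θV - θA‖ ≤ ‖θV - θ‖ := by
    nlinarith [norm_nonneg (θV - θA), norm_nonneg (θV - θ)]
  have h3 : ‖θA - θ‖ ≤ ‖θA - θV‖ + ‖θV - θ‖ := norm_sub_le_norm_sub_add_norm_sub _ _ _
  have h4 : ‖θA - θV‖ = ‖θV - θA‖ := norm_sub_rev _ _
  nlinarith [norm_nonneg (θA - θ), norm_nonneg (θV - θ), norm_nonneg (θV - θA)]
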